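/- Durfee-square-type identity: Σ_{r≥0} q^r/((q)_r)² = (1/(q)_∞) Σ_{k≥0} q^{k²+k}/((q)_k)², as formal power series in q. -/

import Mathlib

/- Durfee-square-type identity:
     Σ_{r≥0} q^r/((q)_r)² = (1/(q)_∞) Σ_{k≥0} q^{k²+k}/((q)_k)²
   in ℚ[[q]], stated coefficientwise: replacing (q)_∞ by its truncation
   (q)_{N+1} and truncating the sums at r, k ≤ N does not affect the
   coefficient of q^N, all omitted terms having order > N. -/

open PowerSeries Finset

/-- `(q)_k = ∏_{i=1}^k (1 - q^i)` in `ℚ[[q]]`. -/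
noncomputable def qPoch (k : ℕ) : PowerSeries ℚ :=
  ∏ i ∈ Finset.range k, (1 - (PowerSeries.X : PowerSeries ℚ) ^ (i + 1))

namespace DurfeeAux

abbrev Q := PowerSeries ℚ

lemma qPoch_succ (r : ℕ) : qPoch (r+1) = qPoch r * (1 - X ^ (r+1)) := by
  unfold qPoch; rw [Finset.prod_range_succ]

lemma constC_qPoch (r : ℕ) : constantCoeff (qPoch r) = 1 := by
  unfold qPoch
  rw [map_prod]
  apply Finset.prod_eq_one
  intro i _
  simp [constantCoeff_X]

lemma qPoch_mul_inv (r : ℕ) : qPoch r * (qPoch r)⁻¹ = 1 :=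
  PowerSeries.mul_inv_cancel _ (by rw [constC_qPoch]; norm_num)

lemma constC_one_sub (m : ℕ) : constantCoeff (1 - X ^ (m+1) : Q) = 1 := by
  simp [constantCoeff_X]

lemma one_sub_mul_inv (m : ℕ) :
    (1 - X ^ (m+1) : Q) * (1 - X ^ (m+1) : Q)⁻¹ = 1 :=
  PowerSeries.mul_inv_cancel _ (by rw [constC_one_sub]; norm_num)

/-- congruence mod X^M -/
def C (M : ℕ) (a b : Q) : Prop := (X : Q)^M ∣ a - b

lemma C.refl (M : ℕ) (a : Q) : C M a a := by simp [C]

lemma C.symm {M a b} (h : C M a b) : C M b a := by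
  simpa [C, neg_sub] using h.neg_right

lemma C.trans {M a b c} (h1 : C M a b) (h2 : C M b c) : C M a c := by
  have := dvd_add h1 h2
  simpa [C] using this

lemma C.add {M a b c d} (h1 : C M a b) (h2 : C M c d) : C M (a + c) (b + d) := by
  have := dvd_add h1 h2
  unfold C at *
  convert this using 1; ring

lemma C.sub {M a b c d} (h1 : C M a b) (h2 : C M c d) : C M (a - c) (b - d) := by
  have := dvd_sub h1 h2
  unfold C at *
  convert this using 1; ring

lemma C.mul {M a b c d} (h1 : C M a b) (h2 : C M c d) : C M (a * c) (b * d) := by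
  unfold C at *
  have : a * c - b * d = (a - b) * c + b * (c - d) := by ring
  rw [this]
  exact dvd_add (h1.mul_right _) (h2.mul_left _)

lemma C.mul_left {M a b} (c : Q) (h : C M a b) : C M (c * a) (c * b) :=
  (C.refl M c).mul h

lemma C.mul_right {M a b} (c : Q) (h : C M a b) : C M (a * c) (b * c) :=
  h.mul (C.refl M c)

lemma C.sum {M : ℕ} {ι : Type*} (s : Finset ι) (f g : ι → Q)
    (h : ∀ i ∈ s, C M (f i) (g i)) : C M (∑ i ∈ s, f i) (∑ i ∈ s, g i) := by
  unfold C at *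
  rw [← Finset.sum_sub_distrib]
  exact Finset.dvd_sum h

lemma C_of_eq {M : ℕ} {a b : Q} (h : a = b) : C M a b := by simp [C, h]

lemma C_zero_of_dvd {M : ℕ} {a : Q} (h : (X:Q)^M ∣ a) : C M a 0 := by simpa [C] using h

lemma C.cancel_unit {M : ℕ} {a : Q} (u : Q) (hu : constantCoeff u ≠ 0)
    (h : (X:Q)^M ∣ u * a) : (X:Q)^M ∣ a := by
  have h2 : (X:Q)^M ∣ u⁻¹ * (u * a) := h.mul_left _
  rwa [← mul_assoc, PowerSeries.inv_mul_cancel _ hu, one_mul] at h2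

/-- cancel a unit factor in a congruence -/
lemma C.cancel {M : ℕ} {a b : Q} (u : Q) (hu : constantCoeff u ≠ 0)
    (h : C M (u * a) (u * b)) : C M a b := by
  unfold C at *
  have : u * a - u * b = u * (a - b) := by ring
  rw [this] at h
  exact C.cancel_unit u hu h

lemma X_pow_mono {m M : ℕ} (h : M ≤ m) : (X:Q)^M ∣ (X:Q)^m := pow_dvd_pow _ h

lemma C_X_pow_mul {M m : ℕ} (h : M ≤ m) (a : Q) : C M ((X:Q)^m * a) 0 := by
  unfold C
  rw [sub_zero]
  exact (X_pow_mono h).mul_right a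


def tri : ℕ → ℕ
  | 0 => 0
  | (j+1) => tri j + j

/-- Gaussian binomial as power series, via Pascal recursion. -/
noncomputable def B : ℕ → ℕ → Q
  | 0, 0 => 1
  | 0, _+1 => 0
  | _+1, 0 => 1
  | n+1, j+1 => X^(j+1) * B n (j+1) + B n j

lemma B_zero (n : ℕ) : B n 0 = 1 := by cases n <;> rfl

lemma B_of_gt : ∀ n j, n < j → B n j = 0 := by
  intro n
  induction n with
  | zero => intro j hj; match j, hj with | (j+1), _ => rfl
  | succ n ih =>
    intro j hj
    match j, hj with
    | (j+1), hj =>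
      show X^(j+1) * B n (j+1) + B n j = 0
      rw [ih (j+1) (by omega), ih j (by omega)]
      ring

lemma B_val : ∀ n j, j ≤ n → B n j * (qPoch j * qPoch (n - j)) = qPoch n := by
  intro n
  induction n with
  | zero =>
    intro j hj
    interval_cases j
    simp [B_zero, qPoch]
  | succ n ih =>
    intro j hj
    match j with
    | 0 =>
      simp only [B_zero, Nat.sub_zero, one_mul]
      show qPoch 0 * qPoch (n+1) = qPoch (n+1)
      simp [qPoch]
    | (j+1) =>
      show (X^(j+1) * B n (j+1) + B n j) * (qPoch (j+1) * qPoch (n + 1 - (j+1))) = qPoch (n+1)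
      have hn1 : n + 1 - (j+1) = n - j := by omega
      rw [hn1]
      rcases Nat.lt_or_ge n (j+1) with hlt | hle
      · -- j = n
        have hjn : n = j := by omega
        subst hjn
        rw [B_of_gt n (n+1) (by omega)]
        simp only [mul_zero, zero_mul, zero_add, Nat.sub_self]
        have := ih n le_rfl
        rw [Nat.sub_self] at this
        calc B n n * (qPoch (n+1) * qPoch 0) 
            = (B n n * (qPoch n * qPoch 0)) * (1 - X^(n+1)) := by
              rw [qPoch_succ]; ring
          _ = qPoch n * (1 - X^(n+1)) := by rw [this]
          _ = qPoch (n+1) := (qPoch_succ n).symm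
      · -- j+1 ≤ n
        have h1 := ih (j+1) hle
        have h2 := ih j (by omega)
        have hnj : n - j = (n - (j+1)) + 1 := by omega
        calc (X^(j+1) * B n (j+1) + B n j) * (qPoch (j+1) * qPoch (n - j))
            = X^(j+1) * (B n (j+1) * (qPoch (j+1) * qPoch (n-j)))
              + B n j * (qPoch (j+1) * qPoch (n-j)) := by ring
          _ = X^(j+1) * (B n (j+1) * (qPoch (j+1) * (qPoch (n-(j+1)) * (1 - X^(n-j)))))
              + B n j * ((qPoch j * (1 - X^(j+1))) * qPoch (n-j)) := by
                rw [hnj, qPoch_succ (n - (j+1)), ← hnj, qPoch_succ j]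
          _ = X^(j+1) * (1 - X^(n-j)) * (B n (j+1) * (qPoch (j+1) * qPoch (n-(j+1))))
              + (1 - X^(j+1)) * (B n j * (qPoch j * qPoch (n-j))) := by ring
          _ = X^(j+1) * (1 - X^(n-j)) * qPoch n + (1 - X^(j+1)) * qPoch n := by rw [h1, h2]
          _ = qPoch n * (1 - X^(n+1)) := by
              have hx : (X:Q)^(j+1) * X^(n-j) = X^(n+1) := by
                rw [← pow_add]
                congr 1
                omega
              rw [← hx]
              ring
          _ = qPoch (n+1) := (qPoch_succ n).symm


lemma tri_succ (j : ℕ) : tri (j+1) = tri j + j := rfl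

/-- `∑_{j+k=n} (-1)^j q^{tri j + nk} [n choose j]_q = (-1)^n q^{tri n} (q)_n`. -/
lemma G_sum : ∀ n : ℕ, (∑ p ∈ Finset.HasAntidiagonal.antidiagonal n,
      ((-1:Q))^p.1 * X^(tri p.1 + n * p.2) * B n p.1)
    = (-1:Q)^n * X^(tri n) * qPoch n := by
  intro n
  induction n with
  | zero =>
    simp [tri, qPoch, B_zero]
  | succ n ih =>
    have tS : (∑ p ∈ Finset.HasAntidiagonal.antidiagonal (n+1),
        ((-1:Q))^p.1 * X^(tri p.1 + n * p.2) * B n p.1)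
        = X^n * ((-1:Q)^n * X^(tri n) * qPoch n) := by
      rw [Finset.Nat.sum_antidiagonal_succ']
      rw [B_of_gt n (n+1) (by omega)]
      rw [← ih, Finset.mul_sum]
      rw [mul_zero, zero_add]
      apply Finset.sum_congr rfl
      intro p hp
      rw [Finset.HasAntidiagonal.mem_antidiagonal] at hp
      have e : tri p.1 + n * (p.2 + 1) = n + (tri p.1 + n * p.2) := by
        rw [Nat.mul_succ]; omega
      rw [e, pow_add]
      ring
    have tShift : (∑ p ∈ Finset.HasAntidiagonal.antidiagonal n,
        ((-1:Q))^(p.1+1) * X^(tri (p.1+1) + n * p.2) * B n (p.1+1))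
        = X^n * ((-1:Q)^n * X^(tri n) * qPoch n) - X^(n*(n+1)) := by
      have h := Finset.Nat.sum_antidiagonal_succ (n := n)
        (f := fun p => ((-1:Q))^p.1 * X^(tri p.1 + n * p.2) * B n p.1)
      rw [tS] at h
      simp only [show ((0:ℕ), n+1).1 = 0 from rfl, show ((0:ℕ), n+1).2 = n+1 from rfl,
        show tri 0 = 0 from rfl, pow_zero, one_mul, zero_add, B_zero, mul_one] at h
      -- h : X^n * (...) = X^(n*(n+1)) + ∑ ...
      rw [h]; ring
    -- main splitting
    rw [Finset.Nat.sum_antidiagonal_succ]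
    have hterm : ∀ p ∈ Finset.HasAntidiagonal.antidiagonal n,
        ((-1:Q))^(p.1+1) * X^(tri (p.1+1) + (n+1) * p.2) * B (n+1) (p.1+1)
        = X^(n+1) * (((-1:Q))^(p.1+1) * X^(tri (p.1+1) + n * p.2) * B n (p.1+1))
          + (-(X^n)) * (((-1:Q))^p.1 * X^(tri p.1 + n * p.2) * B n p.1) := by
      intro p hp
      rw [Finset.HasAntidiagonal.mem_antidiagonal] at hp
      show ((-1:Q))^(p.1+1) * X^(tri (p.1+1) + (n+1) * p.2) * (X^(p.1+1) * B n (p.1+1) + B n p.1) = _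
      have e1 : tri (p.1+1) + (n+1) * p.2 + (p.1+1) = (n+1) + (tri (p.1+1) + n * p.2) := by
        rw [Nat.succ_mul]; omega
      have e2 : tri (p.1+1) + (n+1) * p.2 = n + (tri p.1 + n * p.2) := by
        rw [tri_succ, Nat.succ_mul]; omega
      calc ((-1:Q))^(p.1+1) * X^(tri (p.1+1) + (n+1) * p.2) * (X^(p.1+1) * B n (p.1+1) + B n p.1)
          = ((-1:Q))^(p.1+1) * X^(tri (p.1+1) + (n+1) * p.2 + (p.1+1)) * B n (p.1+1)
            + ((-1:Q))^(p.1+1) * X^(tri (p.1+1) + (n+1) * p.2) * B n p.1 := by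
            rw [pow_add]; ring
        _ = _ := by
            rw [e1, e2, pow_add ((X:Q)) (n+1), pow_add ((X:Q)) n, pow_succ]
            ring
    rw [Finset.sum_congr rfl hterm, Finset.sum_add_distrib, ← Finset.mul_sum, ← Finset.mul_sum]
    rw [tShift, ih]
    simp only [show ((0:ℕ), n+1).1 = 0 from rfl, show ((0:ℕ), n+1).2 = n+1 from rfl,
      show tri 0 = 0 from rfl, pow_zero, one_mul, zero_add, B_zero, mul_one]
    have x1 : (X:Q)^((n+1)*(n+1)) = X^(n+1) * X^(n*(n+1)) := by
      rw [← pow_add]; congr 1; ring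
    rw [x1, show tri (n+1) = tri n + n from rfl, pow_add (X:Q) (tri n) n, qPoch_succ]
    ring


lemma qPoch_ne_zero (r : ℕ) : qPoch r ≠ 0 := by
  intro h
  have := constC_qPoch r
  rw [h] at this
  simp at this

lemma inv_qPoch_zero : ((qPoch 0)⁻¹ : Q) = 1 := by
  have h := qPoch_mul_inv 0
  rwa [show qPoch 0 = 1 from by simp [qPoch], one_mul] at h

lemma inv_step (r : ℕ) : (1 - X^(r+1)) * (qPoch (r+1))⁻¹ = (qPoch r)⁻¹ := by
  apply mul_left_cancel₀ (qPoch_ne_zero r)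
  calc qPoch r * ((1 - X^(r+1)) * (qPoch (r+1))⁻¹)
      = qPoch (r+1) * (qPoch (r+1))⁻¹ := by rw [qPoch_succ]; ring
    _ = 1 := qPoch_mul_inv _
    _ = qPoch r * (qPoch r)⁻¹ := (qPoch_mul_inv r).symm

noncomputable def f (m R : ℕ) : Q := ∑ r ∈ Finset.range (R+1), X^(m*r) * (qPoch r)⁻¹

noncomputable def g (m R : ℕ) : Q :=
  ∑ j ∈ Finset.range (R+1), ((-1:Q))^j * X^(tri j + m*j) * (qPoch j)⁻¹

lemma f_step (m R : ℕ) :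
    (1 - X^m) * f m R = f (m+1) R - X^(m*(R+1)) * (qPoch R)⁻¹ := by
  have key : f m R - f (m+1) R = X^m * f m R - X^(m*(R+1)) * (qPoch R)⁻¹ := by
    unfold f
    rw [← Finset.sum_sub_distrib]
    have t1 : ∀ r ∈ Finset.range (R+1),
        X^(m*r) * (qPoch r)⁻¹ - X^((m+1)*r) * (qPoch r)⁻¹
        = X^(m*r) * ((1 - X^r) * (qPoch r)⁻¹) := by
      intro r _
      rw [show (m+1)*r = m*r + r from by ring, pow_add]
      ring
    rw [Finset.sum_congr rfl t1, Finset.sum_range_succ']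
    simp only [pow_zero, sub_self, zero_mul, mul_zero, add_zero, Nat.mul_zero]
    have t2 : ∀ i ∈ Finset.range R,
        X^(m*(i+1)) * ((1 - X^(i+1)) * (qPoch (i+1))⁻¹)
        = X^m * (X^(m*i) * (qPoch i)⁻¹) := by
      intro i _
      rw [inv_step, show m*(i+1) = m + m*i from by ring, pow_add]
      ring
    rw [Finset.sum_congr rfl t2, ← Finset.mul_sum, Finset.sum_range_succ]
    rw [show m*(R+1) = m + m*R from by ring, pow_add]
    ring
  linear_combination key

lemma g_step (m R : ℕ) :
    g m R = (1 - X^m) * g (m+1) R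
      + ((-1:Q))^R * X^(m + (tri R + (m+1)*R)) * (qPoch R)⁻¹ := by
  have key : g m R - g (m+1) R
      = -(X^m * g (m+1) R) + X^m * (((-1:Q))^R * X^(tri R + (m+1)*R) * (qPoch R)⁻¹) := by
    unfold g
    rw [← Finset.sum_sub_distrib]
    have t1 : ∀ j ∈ Finset.range (R+1),
        ((-1:Q))^j * X^(tri j + m*j) * (qPoch j)⁻¹
          - ((-1:Q))^j * X^(tri j + (m+1)*j) * (qPoch j)⁻¹
        = ((-1:Q))^j * X^(tri j + m*j) * ((1 - X^j) * (qPoch j)⁻¹) := by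
      intro j _
      rw [show tri j + (m+1)*j = (tri j + m*j) + j from by ring, pow_add]
      ring
    rw [Finset.sum_congr rfl t1, Finset.sum_range_succ']
    simp only [pow_zero, sub_self, zero_mul, mul_zero, add_zero, Nat.mul_zero]
    have t2 : ∀ i ∈ Finset.range R,
        ((-1:Q))^(i+1) * X^(tri (i+1) + m*(i+1)) * ((1 - X^(i+1)) * (qPoch (i+1))⁻¹)
        = -(X^m * (((-1:Q))^i * X^(tri i + (m+1)*i) * (qPoch i)⁻¹)) := by
      intro i _
      rw [inv_step, tri_succ,
        show (tri i + i) + m*(i+1) = m + (tri i + (m+1)*i) from by ring, pow_add, pow_succ]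
      ring
    rw [Finset.sum_congr rfl t2, Finset.sum_neg_distrib, ← Finset.mul_sum,
      Finset.sum_range_succ]
    ring
  linear_combination key

lemma qPoch_stable (M : ℕ) : ∀ d : ℕ, C M (qPoch (M + d)) (qPoch M) := by
  intro d
  induction d with
  | zero => exact C.refl M _
  | succ d ih =>
    have : C M (qPoch (M + (d+1))) (qPoch (M + d)) := by
      unfold C
      rw [show M + (d+1) = (M + d) + 1 from by ring, qPoch_succ]
      have : qPoch (M+d) * (1 - X^(M+d+1)) - qPoch (M+d)
          = -(X^(M+d+1) * qPoch (M+d)) := by ring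
      rw [this]
      exact dvd_neg.mpr ((X_pow_mono (by omega)).mul_right _)
    exact this.trans ih

lemma qPoch_stable' {M a b : ℕ} (ha : M ≤ a) (hb : M ≤ b) : C M (qPoch a) (qPoch b) := by
  have h1 := qPoch_stable M (a - M)
  have h2 := qPoch_stable M (b - M)
  rw [Nat.add_sub_cancel' ha] at h1
  rw [Nat.add_sub_cancel' hb] at h2
  exact h1.trans h2.symm

lemma f_one {M m R : ℕ} (hm : M ≤ m) : C M (f m R) 1 := by
  unfold C f
  rw [Finset.sum_range_succ']
  simp only [Nat.mul_zero, pow_zero, one_mul, inv_qPoch_zero]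
  rw [add_sub_cancel_right]
  apply Finset.dvd_sum
  intro i _
  exact (X_pow_mono (le_trans hm (by nlinarith))).mul_right _

lemma g_one {M m R : ℕ} (hm : M ≤ m) : C M (g m R) 1 := by
  unfold C g
  rw [Finset.sum_range_succ']
  simp only [Nat.mul_zero, pow_zero, one_mul, inv_qPoch_zero, mul_one,
    show tri 0 = 0 from rfl, Nat.add_zero]
  rw [add_sub_cancel_right]
  apply Finset.dvd_sum
  intro i _
  have hd : (X:Q)^M ∣ X^(tri (i+1) + m*(i+1)) :=
    X_pow_mono (le_trans hm (by nlinarith [Nat.zero_le (tri (i+1))]))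
  exact (hd.mul_left _).mul_right _

lemma E1claim {M R : ℕ} (hR : M ≤ R) : ∀ m, C M (qPoch M * f (m+1) R) (qPoch m) := by
  suffices h : ∀ d m, M ≤ m + d → C M (qPoch M * f (m+1) R) (qPoch m) by
    intro m
    exact h M m (by omega)
  intro d
  induction d with
  | zero =>
    intro m hm
    simp only [Nat.add_zero] at hm
    have h1 : C M (qPoch M * f (m+1) R) (qPoch M * 1) := (f_one (by omega)).mul_left _
    rw [mul_one] at h1
    exact h1.trans (qPoch_stable' le_rfl hm)
  | succ d ih =>
    intro m hm
    rcases le_or_gt M (m + d) with h | h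
    · exact ih m h
    · -- use step at m
      have hstep := f_step (m+1) R
      have h2 : C M (qPoch M * ((1 - X^(m+1)) * f (m+1) R)) (qPoch (m+1)) := by
        rw [hstep, mul_sub]
        have h3 : C M (qPoch M * (f (m+1+1) R)) (qPoch (m+1)) := ih (m+1) (by omega)
        have h4 : C M (qPoch M * (X^((m+1)*(R+1)) * (qPoch R)⁻¹)) 0 := by
          unfold C
          rw [sub_zero]
          exact ((X_pow_mono (show M ≤ (m+1)*(R+1) by nlinarith)).mul_right _).mul_left _
        have := h3.sub h4
        rwa [sub_zero] at this
      have h5 : C M ((1 - X^(m+1)) * (qPoch M * f (m+1) R)) ((1 - X^(m+1)) * qPoch m) := by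
        have : qPoch (m+1) = (1 - X^(m+1)) * qPoch m := by rw [qPoch_succ]; ring
        rw [← this]
        refine C.trans (C_of_eq (by ring)) h2
      exact C.cancel _ (by rw [constC_one_sub]; norm_num) h5

lemma E2claim {M R : ℕ} (hR : M ≤ R) : ∀ m, C M (g (m+1) R * qPoch m) (qPoch M) := by
  suffices h : ∀ d m, M ≤ m + d → C M (g (m+1) R * qPoch m) (qPoch M) by
    intro m
    exact h M m (by omega)
  intro d
  induction d with
  | zero =>
    intro m hm
    simp only [Nat.add_zero] at hm
    have h1 : C M (g (m+1) R * qPoch m) (1 * qPoch m) := (g_one (by omega)).mul_right _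
    rw [one_mul] at h1
    exact h1.trans (qPoch_stable' hm le_rfl)
  | succ d ih =>
    intro m hm
    rcases le_or_gt M (m + d) with h | h
    · exact ih m h
    · have hstep := g_step (m+1) R
      rw [hstep, add_mul]
      have h3 : C M ((1 - X^(m+1)) * g (m+1+1) R * qPoch m) (qPoch M) := by
        have h3' := ih (m+1) (by omega)
        refine C.trans (C_of_eq ?_) h3'
        rw [qPoch_succ]
        ring
      have h4 : C M (((-1:Q))^R * X^((m+1) + (tri R + (m+1+1)*R)) * (qPoch R)⁻¹ * qPoch m) 0 := by
        unfold C
        rw [sub_zero]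
        have hd : (X:Q)^M ∣ X^((m+1) + (tri R + (m+1+1)*R)) :=
          X_pow_mono (by nlinarith [Nat.zero_le (tri R)])
        exact ((hd.mul_left _).mul_right _).mul_right _
      have := h3.add h4
      rwa [add_zero] at this


lemma Hg (M : ℕ) (r : ℕ) : C M (qPoch M * (qPoch r)⁻¹) (g (r+1) M) := by
  have h := E2claim (le_rfl : M ≤ M) r
  have h2 := h.mul_right ((qPoch r)⁻¹)
  rw [mul_assoc, qPoch_mul_inv, mul_one] at h2
  exact h2.symm

lemma hBinv {n j : ℕ} (h : j ≤ n) :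
    (qPoch j)⁻¹ * (qPoch (n-j))⁻¹ = B n j * (qPoch n)⁻¹ := by
  apply mul_left_cancel₀ (mul_ne_zero (qPoch_ne_zero j) (qPoch_ne_zero (n-j)))
  calc qPoch j * qPoch (n-j) * ((qPoch j)⁻¹ * (qPoch (n-j))⁻¹)
      = (qPoch j * (qPoch j)⁻¹) * (qPoch (n-j) * (qPoch (n-j))⁻¹) := by ring
    _ = 1 := by rw [qPoch_mul_inv, qPoch_mul_inv, mul_one]
    _ = qPoch n * (qPoch n)⁻¹ := (qPoch_mul_inv n).symm
    _ = (B n j * (qPoch j * qPoch (n-j))) * (qPoch n)⁻¹ := by rw [B_val n j h]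
    _ = qPoch j * qPoch (n-j) * (B n j * (qPoch n)⁻¹) := by ring

/-- Claim I : (q)_∞² · Σ q^r/(q)_r² ≡ partial theta. -/
lemma claimI (M : ℕ) :
    C M (qPoch M * qPoch M * (∑ r ∈ Finset.range (M+1), X^r * (qPoch r)⁻¹ * (qPoch r)⁻¹))
      (∑ j ∈ Finset.range (M+1), ((-1:Q))^j * X^(tri j + j)) := by
  have e1 : qPoch M * qPoch M * (∑ r ∈ Finset.range (M+1), X^r * (qPoch r)⁻¹ * (qPoch r)⁻¹)
      = ∑ r ∈ Finset.range (M+1),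
          (X^r * (qPoch r)⁻¹ * qPoch M) * (qPoch M * (qPoch r)⁻¹) := by
    rw [Finset.mul_sum]
    exact Finset.sum_congr rfl fun r _ => by ring
  have c2 : C M (∑ r ∈ Finset.range (M+1),
        (X^r * (qPoch r)⁻¹ * qPoch M) * (qPoch M * (qPoch r)⁻¹))
      (∑ r ∈ Finset.range (M+1), (X^r * (qPoch r)⁻¹ * qPoch M) * g (r+1) M) :=
    C.sum _ _ _ fun r _ => (Hg M r).mul_left _
  have e3 : (∑ r ∈ Finset.range (M+1), (X^r * (qPoch r)⁻¹ * qPoch M) * g (r+1) M)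
      = ∑ j ∈ Finset.range (M+1),
          (((-1:Q))^j * X^(tri j + j) * (qPoch j)⁻¹) * (qPoch M * f (j+1) M) := by
    calc (∑ r ∈ Finset.range (M+1), (X^r * (qPoch r)⁻¹ * qPoch M) * g (r+1) M)
        = ∑ r ∈ Finset.range (M+1), ∑ j ∈ Finset.range (M+1),
            (X^r * (qPoch r)⁻¹ * qPoch M)
              * (((-1:Q))^j * X^(tri j + (r+1)*j) * (qPoch j)⁻¹) := by
          refine Finset.sum_congr rfl fun r _ => ?_
          unfold g
          rw [Finset.mul_sum]
      _ = ∑ j ∈ Finset.range (M+1), ∑ r ∈ Finset.range (M+1),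
            (X^r * (qPoch r)⁻¹ * qPoch M)
              * (((-1:Q))^j * X^(tri j + (r+1)*j) * (qPoch j)⁻¹) := Finset.sum_comm
      _ = _ := by
          refine Finset.sum_congr rfl fun j _ => ?_
          unfold f
          rw [Finset.mul_sum, Finset.mul_sum]
          refine Finset.sum_congr rfl fun r _ => ?_
          rw [show tri j + (r+1)*j = (tri j + j) + j*r from by ring,
            show (j+1)*r = j*r + r from by ring, pow_add, pow_add]
          ring
  have c4 : C M (∑ j ∈ Finset.range (M+1),
        (((-1:Q))^j * X^(tri j + j) * (qPoch j)⁻¹) * (qPoch M * f (j+1) M))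
      (∑ j ∈ Finset.range (M+1), ((-1:Q))^j * X^(tri j + j)) := by
    refine C.sum _ _ _ fun j _ => ?_
    refine C.trans ((E1claim le_rfl j).mul_left _) (C_of_eq ?_)
    calc (((-1:Q))^j * X^(tri j + j) * (qPoch j)⁻¹) * qPoch j
        = ((-1:Q))^j * X^(tri j + j) * (qPoch j * (qPoch j)⁻¹) := by ring
      _ = ((-1:Q))^j * X^(tri j + j) := by rw [qPoch_mul_inv, mul_one]
  exact ((C_of_eq e1).trans c2).trans ((C_of_eq e3).trans c4)

/-- Claim II : (q)_∞ · Σ q^{k²+k}/(q)_k² ≡ partial theta. -/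
lemma claimII (M : ℕ) :
    C M (qPoch M * (∑ k ∈ Finset.range (M+1), X^(k^2+k) * (qPoch k)⁻¹ * (qPoch k)⁻¹))
      (∑ j ∈ Finset.range (M+1), ((-1:Q))^j * X^(tri j + j)) := by
  set F : ℕ × ℕ → Q := fun p =>
    ((-1:Q))^p.2 * X^((p.1+p.2)*p.1 + (p.1+p.2) + tri p.2)
      * ((qPoch p.1)⁻¹ * (qPoch p.2)⁻¹) with hF
  have e1 : qPoch M * (∑ k ∈ Finset.range (M+1), X^(k^2+k) * (qPoch k)⁻¹ * (qPoch k)⁻¹)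
      = ∑ k ∈ Finset.range (M+1),
          (X^(k^2+k) * (qPoch k)⁻¹) * (qPoch M * (qPoch k)⁻¹) := by
    rw [Finset.mul_sum]
    exact Finset.sum_congr rfl fun k _ => by ring
  have c2 : C M (∑ k ∈ Finset.range (M+1), (X^(k^2+k) * (qPoch k)⁻¹) * (qPoch M * (qPoch k)⁻¹))
      (∑ k ∈ Finset.range (M+1), (X^(k^2+k) * (qPoch k)⁻¹) * g (k+1) M) :=
    C.sum _ _ _ fun k _ => (Hg M k).mul_left _
  have e3 : (∑ k ∈ Finset.range (M+1), (X^(k^2+k) * (qPoch k)⁻¹) * g (k+1) M)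
      = ∑ p ∈ Finset.range (M+1) ×ˢ Finset.range (M+1), F p := by
    rw [Finset.sum_product]
    refine Finset.sum_congr rfl fun k _ => ?_
    unfold g
    rw [Finset.mul_sum]
    refine Finset.sum_congr rfl fun j _ => ?_
    simp only [hF]
    rw [show (k+j)*k + (k+j) + tri j = (k^2+k) + (tri j + (k+1)*j) from by ring, pow_add]
    ring
  -- discard terms with k+j > M
  have c4 : C M (∑ p ∈ Finset.range (M+1) ×ˢ Finset.range (M+1), F p)
      (∑ p ∈ (Finset.range (M+1) ×ˢ Finset.range (M+1)).filter (fun p => p.1+p.2 ≤ M), F p) := by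
    rw [← Finset.sum_filter_add_sum_filter_not (Finset.range (M+1) ×ˢ Finset.range (M+1))
      (fun p => p.1+p.2 ≤ M) F]
    have : C M (∑ p ∈ (Finset.range (M+1) ×ˢ Finset.range (M+1)).filter
        (fun p => ¬ p.1+p.2 ≤ M), F p) 0 := by
      refine C.trans (C.sum _ _ (fun _ => 0) fun p hp => ?_) (C_of_eq (by simp))
      rw [Finset.mem_filter] at hp
      apply C_zero_of_dvd
      have hd : (X:Q)^M ∣ X^((p.1+p.2)*p.1 + (p.1+p.2) + tri p.2) :=
        X_pow_mono (by nlinarith [Nat.zero_le (tri p.2), Nat.zero_le ((p.1+p.2)*p.1),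
          Nat.lt_of_not_le hp.2])
      exact (hd.mul_left _).mul_right _
    have h2 := (C.refl M (∑ p ∈ (Finset.range (M+1) ×ˢ Finset.range (M+1)).filter
        (fun p => p.1+p.2 ≤ M), F p)).add this
    rwa [add_zero] at h2
  have e5 : (Finset.range (M+1) ×ˢ Finset.range (M+1)).filter (fun p => p.1+p.2 ≤ M)
      = (Finset.range (M+1)).biUnion (fun n => Finset.HasAntidiagonal.antidiagonal n) := by
    ext p
    simp only [Finset.mem_filter, Finset.mem_product, Finset.mem_biUnion, Finset.mem_range,
      Finset.HasAntidiagonal.mem_antidiagonal]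
    constructor
    · rintro ⟨⟨h1, h2⟩, h3⟩
      exact ⟨p.1 + p.2, by omega, rfl⟩
    · rintro ⟨n, hn, h⟩
      omega
  have e6 : ∀ n ∈ Finset.range (M+1), (∑ p ∈ Finset.HasAntidiagonal.antidiagonal n, F p)
      = ((-1:Q))^n * X^(tri n + n) := by
    intro n _
    rw [← Finset.Nat.sum_antidiagonal_swap]
    have e7 : ∀ p ∈ Finset.HasAntidiagonal.antidiagonal n, F p.swap
        = (X^n * (qPoch n)⁻¹) * (((-1:Q))^p.1 * X^(tri p.1 + n * p.2) * B n p.1) := by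
      intro p hp
      rw [Finset.HasAntidiagonal.mem_antidiagonal] at hp
      simp only [hF, Prod.fst_swap, Prod.snd_swap]
      have hle : p.1 ≤ n := by omega
      have h2 : p.2 = n - p.1 := by omega
      rw [show p.2 + p.1 = n from by omega]
      rw [h2, mul_comm ((qPoch (n - p.1))⁻¹ : Q) ((qPoch p.1)⁻¹), hBinv hle, ← h2]
      rw [show n*p.2 + n + tri p.1 = (tri p.1 + n*p.2) + n from by ring, pow_add]
      ring
    rw [Finset.sum_congr rfl e7, ← Finset.mul_sum, G_sum n]
    calc (X^n * (qPoch n)⁻¹) * (((-1:Q))^n * X^(tri n) * qPoch n)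
        = ((-1:Q))^n * (X^(tri n) * X^n) * (qPoch n * (qPoch n)⁻¹) := by ring
      _ = ((-1:Q))^n * X^(tri n + n) := by rw [qPoch_mul_inv, pow_add, mul_one]
  have efin : (∑ p ∈ (Finset.range (M+1) ×ˢ Finset.range (M+1)).filter
        (fun p => p.1+p.2 ≤ M), F p)
      = ∑ j ∈ Finset.range (M+1), ((-1:Q))^j * X^(tri j + j) := by
    rw [e5, Finset.sum_biUnion]
    · exact Finset.sum_congr rfl e6
    · intro a _ b _ hab
      refine Finset.disjoint_left.mpr fun p hp hp' => hab ?_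
      rw [Finset.HasAntidiagonal.mem_antidiagonal] at hp hp'
      omega
  exact ((C_of_eq e1).trans c2).trans ((C_of_eq e3).trans (c4.trans (C_of_eq efin)))

lemma mainCong (M : ℕ) :
    C M (qPoch M * (∑ r ∈ Finset.range (M+1), X^r * (qPoch r)⁻¹ * (qPoch r)⁻¹))
      (∑ k ∈ Finset.range (M+1), X^(k^2+k) * (qPoch k)⁻¹ * (qPoch k)⁻¹) := by
  have h1 := claimI M
  have h2 := claimII M
  have h3 := h1.trans h2.symm
  -- h3 : C M (qPoch M * qPoch M * L) (qPoch M * S)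
  unfold C at h3 ⊢
  have h4 : qPoch M * qPoch M * (∑ r ∈ Finset.range (M+1), X^r * (qPoch r)⁻¹ * (qPoch r)⁻¹)
      - qPoch M * (∑ k ∈ Finset.range (M+1), X^(k^2+k) * (qPoch k)⁻¹ * (qPoch k)⁻¹)
      = qPoch M * ((qPoch M * (∑ r ∈ Finset.range (M+1), X^r * (qPoch r)⁻¹ * (qPoch r)⁻¹))
        - (∑ k ∈ Finset.range (M+1), X^(k^2+k) * (qPoch k)⁻¹ * (qPoch k)⁻¹)) := by ring
  rw [h4] at h3
  exact C.cancel_unit _ (by rw [constC_qPoch]; norm_num) h3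

end DurfeeAux

open DurfeeAux in
theorem durfee_type_identity (N : ℕ) :
    PowerSeries.coeff (R := ℚ) N
      (∑ r ∈ Finset.range (N + 1),
        (PowerSeries.X : PowerSeries ℚ) ^ r * ((qPoch r)⁻¹) ^ 2)
    =
    PowerSeries.coeff (R := ℚ) N
      ((qPoch (N + 1))⁻¹ *
        ∑ k ∈ Finset.range (N + 1),
          (PowerSeries.X : PowerSeries ℚ) ^ (k ^ 2 + k) * ((qPoch k)⁻¹) ^ 2) := by
  set L' : Q := ∑ r ∈ Finset.range (N + 1), (X : Q) ^ r * ((qPoch r)⁻¹) ^ 2 with hL'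
  set S' : Q := ∑ k ∈ Finset.range (N + 1), (X : Q) ^ (k ^ 2 + k) * ((qPoch k)⁻¹) ^ 2 with hS'
  have main := mainCong (N+1)
  have cL : DurfeeAux.C (N+1) (∑ r ∈ Finset.range (N+2), X^r * (qPoch r)⁻¹ * (qPoch r)⁻¹) L' := by
    rw [show N + 2 = (N+1) + 1 from rfl, Finset.sum_range_succ]
    have hz : DurfeeAux.C (N+1) (X^(N+1) * (qPoch (N+1))⁻¹ * (qPoch (N+1))⁻¹) 0 :=
      C_zero_of_dvd (((X_pow_mono le_rfl).mul_right _).mul_right _)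
    have he : (∑ r ∈ Finset.range (N+1), X^r * (qPoch r)⁻¹ * (qPoch r)⁻¹) = L' :=
      Finset.sum_congr rfl fun r _ => by ring
    have h2 := (C_of_eq he).add hz
    rwa [add_zero] at h2
  have cS : DurfeeAux.C (N+1) (∑ k ∈ Finset.range (N+2), X^(k^2+k) * (qPoch k)⁻¹ * (qPoch k)⁻¹) S' := by
    rw [show N + 2 = (N+1) + 1 from rfl, Finset.sum_range_succ]
    have hz : DurfeeAux.C (N+1) (X^((N+1)^2+(N+1)) * (qPoch (N+1))⁻¹ * (qPoch (N+1))⁻¹) 0 :=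
      C_zero_of_dvd (((X_pow_mono (by nlinarith)).mul_right _).mul_right _)
    have he : (∑ k ∈ Finset.range (N+1), X^(k^2+k) * (qPoch k)⁻¹ * (qPoch k)⁻¹) = S' :=
      Finset.sum_congr rfl fun k _ => by ring
    have h2 := (C_of_eq he).add hz
    rwa [add_zero] at h2
  have c1 : DurfeeAux.C (N+1) (qPoch (N+1) * L') S' :=
    ((cL.symm.mul_left (qPoch (N+1))).trans main).trans cS
  have c2 := c1.mul_left ((qPoch (N+1))⁻¹)
  have e : (qPoch (N+1))⁻¹ * (qPoch (N+1) * L') = L' := by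
    rw [← mul_assoc, mul_comm ((qPoch (N+1))⁻¹) (qPoch (N+1)), qPoch_mul_inv, one_mul]
  rw [e] at c2
  unfold DurfeeAux.C at c2
  have hz := PowerSeries.X_pow_dvd_iff.mp c2 N (by omega)
  rw [map_sub] at hz
  exact sub_eq_zero.mp hz
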